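/- Let h : ℝ → ℝ be h(x) = −1/(1 + e^x). Then the second derivative is h''(x) = e^x(1 − e^x)/(1 + e^x)³, its supremum in absolute value over ℝ equals √3/18, and this maximal absolute value is attained exactly at the points x = ln(2 + √3) and x = ln(2 − √3). -/

import Mathlib

section SigAux

private lemma sig_d1 (x : ℝ) :
    HasDerivAt (fun x => -1 / (1 + Real.exp x))
      (Real.exp x / (1 + Real.exp x) ^ 2) x := by
  have hne : (1 + Real.exp x) ≠ 0 := by positivity
  have h1 : HasDerivAt (fun x => 1 + Real.exp x) (Real.exp x) x :=
    (Real.hasDerivAt_exp x).const_add 1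
  have h2 := h1.inv hne
  have h3 := h2.neg
  have hf : (fun x => -1 / (1 + Real.exp x)) = fun x => -((1 + Real.exp x)⁻¹) := by
    funext y; rw [neg_div, one_div]
  rw [hf]
  exact h3.congr_deriv (by rw [neg_div, neg_neg])

private lemma sig_d2 (x : ℝ) :
    HasDerivAt (fun x => Real.exp x / (1 + Real.exp x) ^ 2)
      (Real.exp x * (1 - Real.exp x) / (1 + Real.exp x) ^ 3) x := by
  have hne : (1 + Real.exp x) ≠ 0 := by positivity
  have h1 : HasDerivAt (fun x => 1 + Real.exp x) (Real.exp x) x :=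
    (Real.hasDerivAt_exp x).const_add 1
  have h2 : HasDerivAt (fun x => (1 + Real.exp x) ^ 2)
      (2 * (1 + Real.exp x) ^ 1 * Real.exp x) x := h1.pow 2
  have h3 := (Real.hasDerivAt_exp x).div h2 (by positivity)
  exact h3.congr_deriv (by rw [div_eq_div_iff (by positivity) (by positivity)]; ring)

private lemma sig_iter (h : ℝ → ℝ) (hh : ∀ x, h x = -1 / (1 + Real.exp x)) (x : ℝ) :
    iteratedDeriv 2 h x = Real.exp x * (1 - Real.exp x) / (1 + Real.exp x) ^ 3 := by
  have hfun : h = fun x => -1 / (1 + Real.exp x) := funext hh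
  have hd1 : deriv h = fun x => Real.exp x / (1 + Real.exp x) ^ 2 := by
    funext y
    rw [hfun]
    exact (sig_d1 y).deriv
  rw [show (2 : ℕ) = 1 + 1 from rfl, iteratedDeriv_succ, iteratedDeriv_one, hd1]
  exact (sig_d2 x).deriv

private lemma sig_bound (t : ℝ) (ht : 0 < t) :
    |t * (1 - t) / (1 + t) ^ 3| ≤ Real.sqrt 3 / 18 := by
  have hs : Real.sqrt 3 ^ 2 = 3 := Real.sq_sqrt (by norm_num)
  have hpos : (0:ℝ) < 1 + t := by linarith
  have key : |t * (1 - t) / (1 + t) ^ 3| ^ 2 ≤ (Real.sqrt 3 / 18) ^ 2 := by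
    rw [sq_abs, div_pow, div_pow, hs, div_le_div_iff₀ (by positivity) (by norm_num)]
    nlinarith [mul_nonneg (sq_nonneg (t^2 - 4*t + 1)) (by positivity : (0:ℝ) ≤ t^2 + 14*t + 1)]
  exact (pow_le_pow_iff_left₀ (abs_nonneg _) (by positivity) two_ne_zero).mp key

private lemma sig_eq_iff (t : ℝ) (ht : 0 < t) :
    |t * (1 - t) / (1 + t) ^ 3| = Real.sqrt 3 / 18 ↔
      t = 2 + Real.sqrt 3 ∨ t = 2 - Real.sqrt 3 := by
  have hs : Real.sqrt 3 ^ 2 = 3 := Real.sq_sqrt (by norm_num)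
  have hs0 : 0 ≤ Real.sqrt 3 := Real.sqrt_nonneg 3
  have hs2 : Real.sqrt 3 < 2 := by nlinarith
  have hpos : (0:ℝ) < 1 + t := by linarith
  constructor
  · intro heq
    have h2 : (t * (1 - t) / (1 + t) ^ 3) ^ 2 = (Real.sqrt 3 / 18) ^ 2 := by
      rw [← sq_abs, heq]
    rw [div_pow, div_pow, hs, div_eq_div_iff (by positivity) (by norm_num)] at h2
    have h3 : (t^2 - 4*t + 1)^2 * (t^2 + 14*t + 1) = 0 := by nlinarith [h2]
    have h4 : (t^2 - 4*t + 1)^2 = 0 := by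
      rcases mul_eq_zero.mp h3 with h | h
      · exact h
      · nlinarith
    have h5 : t^2 - 4*t + 1 = 0 := by nlinarith [sq_nonneg (t^2 - 4*t + 1)]
    have h6 : (t - (2 + Real.sqrt 3)) * (t - (2 - Real.sqrt 3)) = 0 := by nlinarith
    rcases mul_eq_zero.mp h6 with h | h
    · left; linarith
    · right; linarith
  · rintro (rfl | rfl)
    · rw [abs_eq (by positivity)]
      right
      rw [show (1:ℝ) + (2 + Real.sqrt 3) = 3 + Real.sqrt 3 by ring]
      have hne : (3 : ℝ) + Real.sqrt 3 ≠ 0 := by positivity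
      field_simp
      nlinarith
    · rw [abs_eq (by positivity)]
      left
      rw [show (1:ℝ) + (2 - Real.sqrt 3) = 3 - Real.sqrt 3 by ring]
      have hne : (3 : ℝ) - Real.sqrt 3 ≠ 0 := by nlinarith
      field_simp
      nlinarith

end SigAux

/-- For the reflected sigmoid `h(x) = -1/(1 + eˣ)`, the second derivative is
`h''(x) = eˣ(1 - eˣ)/(1 + eˣ)³`, its supremum in absolute value over `ℝ` is `√3/18`,
and this maximal absolute value is attained exactly at `x = ln(2 + √3)` and
`x = ln(2 - √3)`. -/
theorem sigmoid_second_derivative_sup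
    (h : ℝ → ℝ) (hh : ∀ x, h x = -1 / (1 + Real.exp x)) :
    (∀ x, iteratedDeriv 2 h x =
      Real.exp x * (1 - Real.exp x) / (1 + Real.exp x) ^ 3) ∧
    (⨆ x : ℝ, |iteratedDeriv 2 h x|) = Real.sqrt 3 / 18 ∧
    {x : ℝ | |iteratedDeriv 2 h x| = Real.sqrt 3 / 18} =
      {Real.log (2 + Real.sqrt 3), Real.log (2 - Real.sqrt 3)} := by
  have hs : Real.sqrt 3 ^ 2 = 3 := Real.sq_sqrt (by norm_num)
  have hs0 : 0 ≤ Real.sqrt 3 := Real.sqrt_nonneg 3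
  have hs2 : Real.sqrt 3 < 2 := by nlinarith
  have hiter := sig_iter h hh
  have hbd : ∀ x : ℝ, |iteratedDeriv 2 h x| ≤ Real.sqrt 3 / 18 := fun x => by
    rw [hiter x]; exact sig_bound _ (Real.exp_pos x)
  refine ⟨hiter, ?_, ?_⟩
  · apply le_antisymm
    · exact ciSup_le hbd
    · have hx0 : |iteratedDeriv 2 h (Real.log (2 - Real.sqrt 3))| = Real.sqrt 3 / 18 := by
        rw [hiter]
        apply (sig_eq_iff _ (Real.exp_pos _)).mpr
        right
        rw [Real.exp_log (by linarith)]
      calc Real.sqrt 3 / 18 = |iteratedDeriv 2 h (Real.log (2 - Real.sqrt 3))| := hx0.symm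
        _ ≤ ⨆ x : ℝ, |iteratedDeriv 2 h x| :=
          le_ciSup (f := fun x => |iteratedDeriv 2 h x|)
            ⟨Real.sqrt 3 / 18, fun y ⟨x, hx⟩ => hx ▸ hbd x⟩ _
  · ext x
    simp only [Set.mem_setOf_eq, Set.mem_insert_iff, Set.mem_singleton_iff]
    rw [hiter x]
    rw [sig_eq_iff _ (Real.exp_pos x)]
    constructor
    · rintro (h1 | h1)
      · left; rw [← h1, Real.log_exp]
      · right; rw [← h1, Real.log_exp]
    · rintro (rfl | rfl)
      · left; rw [Real.exp_log (by positivity)]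
      · right; rw [Real.exp_log (by linarith)]
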